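/- Let X ∈ W be written as X = Σᵢ (aᵢ gᵢ + āᵢ g₋ᵢ) where gᵢ are root vectors for positive noncompact roots with Jgᵢ = √-1 gᵢ and g₋ᵢ = conjugate of gᵢ. Then the component of [X, JX] in the Cartan subalgebra equals -2√-1 Σᵢ |aᵢ|² [gᵢ, g₋ᵢ]. In particular, since each [gᵢ, g₋ᵢ] lies in the positive cone of coroots, [X, JX] = 0 implies X = 0. -/

import Mathlib

private lemma sum_lie' {L : Type*} [LieRing L] {I : Type*} [DecidableEq I]
    (s : Finset I) (f : I → L) (y : L) :
    ⁅∑ i ∈ s, f i, y⁆ = ∑ i ∈ s, ⁅f i, y⁆ := by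
  induction s using Finset.induction_on with
  | empty => simp
  | insert _ _ h ih => simp [Finset.sum_insert h, add_lie, ih]

private lemma lie_sum' {L : Type*} [LieRing L] {I : Type*} [DecidableEq I]
    (s : Finset I) (f : I → L) (y : L) :
    ⁅y, ∑ i ∈ s, f i⁆ = ∑ i ∈ s, ⁅y, f i⁆ := by
  induction s using Finset.induction_on with
  | empty => simp
  | insert _ _ h ih => simp [Finset.sum_insert h, lie_add, ih]

/-- For `X = Σᵢ (aᵢ gᵢ + āᵢ g₋ᵢ)` with `gᵢ` root vectors for distinct
positive noncompact roots, `J gᵢ = √-1 gᵢ`, `g₋ᵢ = conj gᵢ` (so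
`JX = Σᵢ (√-1 aᵢ gᵢ - √-1 āᵢ g₋ᵢ)`), the component of `[X, JX]` in the Cartan
subalgebra (extracted by the projection `π` killing all non-Cartan root spaces) equals
`-2√-1 Σᵢ |aᵢ|² [gᵢ, g₋ᵢ]`.  Since the `[gᵢ, g₋ᵢ]` lie in the positive coroot cone
(no nontrivial nonnegative combination vanishes), `[X, JX] = 0` forces `X = 0`. -/
theorem stmt8 {L : Type*} [LieRing L] [LieAlgebra ℂ L]
    {I : Type*} [Fintype I] [DecidableEq I]
    (g gneg : I → L)
    (π : L →ₗ[ℂ] L)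
    (hπdiag : ∀ i, π ⁅g i, gneg i⁆ = ⁅g i, gneg i⁆)
    (hπcross : ∀ i j, i ≠ j → π ⁅g i, gneg j⁆ = 0)
    (hπpp : ∀ i j, π ⁅g i, g j⁆ = 0)
    (hπmm : ∀ i j, π ⁅gneg i, gneg j⁆ = 0)
    (hcone : ∀ t : I → ℝ, (∀ i, 0 ≤ t i) →
      (∑ i, (t i : ℂ) • ⁅g i, gneg i⁆) = 0 → ∀ i, t i = 0)
    (a : I → ℂ) (X JX : L)
    (hX : X = ∑ i, (a i • g i + (starRingEnd ℂ (a i)) • gneg i))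
    (hJX : JX = ∑ i, ((Complex.I * a i) • g i +
      (-Complex.I * starRingEnd ℂ (a i)) • gneg i)) :
    π ⁅X, JX⁆ = (-2 * Complex.I) •
        ∑ i, ((Complex.normSq (a i) : ℂ)) • ⁅g i, gneg i⁆ ∧
    (⁅X, JX⁆ = 0 → ∀ i, a i = 0) := by
  have key : π ⁅X, JX⁆ = (-2 * Complex.I) •
      ∑ i, ((Complex.normSq (a i) : ℂ)) • ⁅g i, gneg i⁆ := by
    subst hX hJX
    rw [sum_lie', map_sum, Finset.smul_sum]
    refine Finset.sum_congr rfl fun i _ => ?_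
    rw [lie_sum', map_sum, Finset.sum_eq_single i]
    · have hmp : π ⁅gneg i, g i⁆ = -⁅g i, gneg i⁆ := by
        rw [← lie_skew, map_neg, hπdiag i]
      simp only [add_lie, lie_add, smul_lie, lie_smul, map_add, map_smul,
        hπdiag i, hπpp, hπmm, hmp, smul_zero, add_zero, zero_add, smul_neg,
        smul_smul]
      rw [← neg_smul, ← add_smul]
      congr 1
      rw [← Complex.mul_conj]
      ring
    · intro j _ hji
      have h1 := hπcross i j (by simpa using hji.symm)
      have h2 : π ⁅gneg i, g j⁆ = 0 := by
        rw [← lie_skew, map_neg, hπcross j i hji, neg_zero]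
      simp [add_lie, lie_add, smul_lie, lie_smul, map_add, map_smul,
        hπpp, hπmm, h1, h2]
    · simp
  refine ⟨key, fun h0 i => ?_⟩
  have hs : (∑ i, ((Complex.normSq (a i) : ℂ)) • ⁅g i, gneg i⁆) = 0 := by
    have hk := key
    rw [h0, map_zero] at hk
    have h2 : (-2 * Complex.I) ≠ 0 := by simp [Complex.I_ne_zero]
    exact (smul_eq_zero.mp hk.symm).resolve_left h2
  have := hcone (fun i => Complex.normSq (a i)) (fun i => Complex.normSq_nonneg _) hs i
  exact Complex.normSq_eq_zero.mp this
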